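/- Let d ≥ 2 and let μ be any Borel probability measure on the unit sphere S^{d−1} ⊂ ℝ^d. Then ∫∫_{S^{d−1}×S^{d−1}} (⟨x, y⟩² − 1/(d+2))² dμ(x) dμ(y) ≥ 2(d+1)/(d(d+2)²). -/

import Mathlib

open RealInnerProductSpace MeasureTheory

section EtfAux

open Finset

private theorem etf_prodSwapEqIff {d : ℕ} (p : Fin d × Fin d) : p = p.swap ↔ p.1 = p.2 := by
  constructor
  · intro h; exact (Prod.ext_iff.mp h).1
  · intro h; exact Prod.ext h h.symm

private theorem etf_key1 (d : ℕ) (a : ℝ) (f g : Fin d → ℝ) (hf : ∑ i, f i^2 = 1)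
    (hg : ∑ i, g i^2 = 1) :
    ∑ p : Fin d × Fin d, (f p.1 * f p.2 - a * (if p.1 = p.2 then 1 else 0))
      * (g p.1 * g p.2 - a * (if p.1 = p.2 then 1 else 0))
    = (∑ i, f i * g i)^2 - (2*a - d*a^2) := by
  have h : ∀ i j : Fin d, (f i * f j - a * (if i = j then 1 else 0))
      * (g i * g j - a * (if i = j then 1 else 0))
      = f i * g i * (f j * g j) - a * (if i = j then f i ^2 else 0)
        - a * (if i = j then g i ^2 else 0) + a^2 * (if i = j then 1 else 0) := by
    intro i j; split_ifs with hij
    · subst hij; ring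
    · ring
  rw [Fintype.sum_prod_type]
  simp only [h, Finset.sum_add_distrib, Finset.sum_sub_distrib, Finset.sum_ite_eq,
    Finset.mem_univ, if_true, ← Finset.mul_sum]
  rw [← Finset.sum_mul, hf, hg, Finset.sum_const, Finset.card_univ, Fintype.card_fin]
  rw [sq (∑ i, f i * g i)]
  ring

private theorem etf_key2 {ι : Type*} [Fintype ι] (u v : ι → ℝ) :
    ∑ q : ι × ι, (u q.1 * u q.2) * (v q.1 * v q.2) = (∑ p, u p * v p)^2 := by
  rw [Fintype.sum_prod_type, sq, Finset.sum_mul_sum]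
  exact Finset.sum_congr rfl fun i _ => Finset.sum_congr rfl fun j _ => by ring

noncomputable def etfWf (d : ℕ) : (Fin d × Fin d) × (Fin d × Fin d) → ℝ :=
  fun q => (if q.1 = q.2 then 1 else 0) + (if q.1 = q.2.swap then 1 else 0)

private theorem etf_key3 (d : ℕ) (u : Fin d × Fin d → ℝ)
    (hu : ∀ p : Fin d × Fin d, u p.swap = u p) :
    ∑ q : (Fin d × Fin d) × (Fin d × Fin d), (u q.1 * u q.2) * etfWf d q
    = 2 * ∑ p, u p ^ 2 := by
  rw [Fintype.sum_prod_type]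
  simp only [etfWf, mul_add, mul_ite, mul_one, mul_zero, Finset.sum_add_distrib]
  have h1 : ∀ p : Fin d × Fin d,
      (∑ q : Fin d × Fin d, if p = q then u p * u q else 0) = u p ^ 2 := by
    intro p; rw [Finset.sum_ite_eq (Finset.univ) p (fun q => u p * u q)]
    simp [sq]
  have h2 : ∀ p : Fin d × Fin d,
      (∑ q : Fin d × Fin d, if p = q.swap then u p * u q else 0) = u p ^ 2 := by
    intro p
    rw [← Equiv.sum_comp (Equiv.prodComm (Fin d) (Fin d))
      (fun q => if p = q.swap then u p * u q else 0)]
    simp only [Equiv.prodComm_apply, Prod.swap_swap]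
    rw [Finset.sum_ite_eq (Finset.univ) p (fun q => u p * u q.swap)]
    simp [hu, sq]
  simp only [h1, h2, ← Finset.sum_add_distrib]
  rw [Finset.mul_sum]
  exact Finset.sum_congr rfl fun p _ => by ring

private theorem etf_key4 (d : ℕ) : ∑ q, (etfWf d q)^2 = 2*(d:ℝ)^2 + 2*d := by
  have h : ∀ q : (Fin d × Fin d) × (Fin d × Fin d), (etfWf d q)^2
      = ((if q.1 = q.2 then 1 else 0) + (if q.1 = q.2.swap then 1 else 0))
        + 2 * (if q.1 = q.2 ∧ q.1 = q.2.swap then 1 else 0) := by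
    intro q; unfold etfWf
    by_cases h1 : q.1 = q.2 <;> by_cases h2 : q.1 = q.2.swap
    · rw [if_pos h1, if_pos h2, if_pos ⟨h1, h2⟩]; norm_num
    · rw [if_pos h1, if_neg h2, if_neg (fun h => h2 h.2)]; norm_num
    · rw [if_neg h1, if_pos h2, if_neg (fun h => h1 h.1)]; norm_num
    · rw [if_neg h1, if_neg h2, if_neg (fun h => h1 h.1)]; norm_num
  have s4 : ∑ p : Fin d × Fin d, (if p.1 = p.2 then (1:ℝ) else 0) = d := by
    rw [Fintype.sum_prod_type]
    simp [Finset.sum_ite_eq]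
  have A : ∑ q : (Fin d × Fin d) × (Fin d × Fin d),
      (if q.1 = q.2 then (1:ℝ) else 0) = (d:ℝ)^2 := by
    rw [Fintype.sum_prod_type]
    simp [Finset.sum_ite_eq, Finset.card_univ]
    ring
  have B : ∑ q : (Fin d × Fin d) × (Fin d × Fin d),
      (if q.1 = q.2.swap then (1:ℝ) else 0) = (d:ℝ)^2 := by
    rw [Fintype.sum_prod_type]
    have : ∀ p : Fin d × Fin d, (∑ q : Fin d × Fin d, if p = q.swap then (1:ℝ) else 0) = 1 := by
      intro p
      rw [← Equiv.sum_comp (Equiv.prodComm (Fin d) (Fin d))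
        (fun q => if p = q.swap then (1:ℝ) else 0)]
      simp
    simp [this, Finset.card_univ]
    ring
  have C : ∑ q : (Fin d × Fin d) × (Fin d × Fin d),
      (if q.1 = q.2 ∧ q.1 = q.2.swap then (1:ℝ) else 0) = d := by
    rw [Fintype.sum_prod_type]
    have hq : ∀ p q : Fin d × Fin d, (if p = q ∧ p = q.swap then (1:ℝ) else 0)
        = if p = q then (if p.1 = p.2 then 1 else 0) else 0 := by
      intro p q; by_cases h' : p = q
      · subst h'; simp [← etf_prodSwapEqIff p]
      · simp [h']
    simp only [hq]
    have : ∀ p : Fin d × Fin d,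
        (∑ q : Fin d × Fin d, if p = q then (if p.1 = p.2 then (1:ℝ) else 0) else 0)
        = if p.1 = p.2 then (1:ℝ) else 0 := by
      intro p
      rw [Finset.sum_ite_eq (Finset.univ) p (fun _ => if p.1 = p.2 then (1:ℝ) else 0)]
      simp
    simp only [this, s4]
  simp only [h, Finset.sum_add_distrib, ← Finset.mul_sum, A, B, C]
  ring

noncomputable def etfA (d : ℕ) : ℝ := (1 - Real.sqrt (2/((d:ℝ)+2)))/d

noncomputable def etfPsi (d : ℕ) (x : EuclideanSpace ℝ (Fin d)) : Fin d × Fin d → ℝ :=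
  fun p => x p.1 * x p.2 - etfA d * (if p.1 = p.2 then 1 else 0)

noncomputable def etfBigPsi (d : ℕ) (x : EuclideanSpace ℝ (Fin d)) :
    EuclideanSpace ℝ ((Fin d × Fin d) × (Fin d × Fin d)) :=
  (WithLp.equiv 2 _).symm (fun q => etfPsi d x q.1 * etfPsi d x q.2)

noncomputable def etfBigW (d : ℕ) : EuclideanSpace ℝ ((Fin d × Fin d) × (Fin d × Fin d)) :=
  (WithLp.equiv 2 _).symm (etfWf d)

private theorem etf_ha_eq (d : ℕ) (hd : 2 ≤ d) :
    2*(etfA d) - d*(etfA d)^2 = 1/((d:ℝ)+2) := by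
  have hd0 : (d:ℝ) ≠ 0 := by
    have : (0:ℝ) < d := by exact_mod_cast Nat.lt_of_lt_of_le (by norm_num) hd
    linarith
  have hd2 : (d:ℝ) + 2 ≠ 0 := by positivity
  have hs2 : Real.sqrt (2/((d:ℝ)+2)) ^ 2 = 2/((d:ℝ)+2) := Real.sq_sqrt (by positivity)
  set s := Real.sqrt (2/((d:ℝ)+2)) with hs
  unfold etfA
  rw [← hs]
  have h1 : 2*((1-s)/d) - d*((1-s)/d)^2 = (1 - s^2)/d := by
    field_simp
    ring
  rw [h1, hs2]
  field_simp
  ring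

private theorem etf_euclid_inner {ι : Type*} [Fintype ι] (x y : EuclideanSpace ℝ ι) :
    ⟪x, y⟫ = ∑ i, x i * y i := by
  simp [PiLp.inner_apply, RCLike.inner_apply, mul_comm]

private theorem etf_sphere_sum_sq (d : ℕ)
    (x : Metric.sphere (0 : EuclideanSpace ℝ (Fin d)) 1) :
    ∑ i, ((x : EuclideanSpace ℝ (Fin d)) i)^2 = 1 := by
  have h : ‖(x : EuclideanSpace ℝ (Fin d))‖ = 1 := by
    simpa using mem_sphere_zero_iff_norm.mp x.2
  have := real_inner_self_eq_norm_sq (x : EuclideanSpace ℝ (Fin d))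
  rw [etf_euclid_inner, h] at this
  simpa [sq] using this

private theorem etf_bigPsi_continuous (d : ℕ) :
    Continuous (fun x : Metric.sphere (0 : EuclideanSpace ℝ (Fin d)) 1 => etfBigPsi d x) := by
  apply Continuous.comp (PiLp.continuous_toLp 2 _)
  apply continuous_pi
  intro q
  have hc : ∀ i : Fin d, Continuous (fun x : Metric.sphere (0 : EuclideanSpace ℝ (Fin d)) 1 =>
      (x : EuclideanSpace ℝ (Fin d)) i) := fun i =>
    (EuclideanSpace.proj i).continuous.comp continuous_subtype_val
  unfold etfPsi
  exact (((hc q.1.1).mul (hc q.1.2)).sub continuous_const).mul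
    (((hc q.2.1).mul (hc q.2.2)).sub continuous_const)

-- inner product of two bigPsi's equals the original integrand
private theorem etf_inner_bigPsi (d : ℕ) (hd : 2 ≤ d)
    (x y : Metric.sphere (0 : EuclideanSpace ℝ (Fin d)) 1) :
    ⟪etfBigPsi d (x : EuclideanSpace ℝ (Fin d)), etfBigPsi d (y : EuclideanSpace ℝ (Fin d))⟫
    = (⟪(x : EuclideanSpace ℝ (Fin d)), (y : EuclideanSpace ℝ (Fin d))⟫ ^ 2
        - 1 / ((d : ℝ) + 2)) ^ 2 := by
  set x' := (x : EuclideanSpace ℝ (Fin d))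
  set y' := (y : EuclideanSpace ℝ (Fin d))
  have h1 : ⟪etfBigPsi d x', etfBigPsi d y'⟫
      = ∑ q : (Fin d × Fin d) × (Fin d × Fin d),
          (etfPsi d x' q.1 * etfPsi d x' q.2) * (etfPsi d y' q.1 * etfPsi d y' q.2) := by
    rw [etf_euclid_inner]
    rfl
  have hψ : ∑ p : Fin d × Fin d, etfPsi d x' p * etfPsi d y' p
      = (∑ i, x' i * y' i)^2 - (2*(etfA d) - d*(etfA d)^2) :=
    etf_key1 d (etfA d) x' y' (etf_sphere_sum_sq d x) (etf_sphere_sum_sq d y)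
  rw [h1, etf_key2, hψ, etf_ha_eq d hd, etf_euclid_inner]

private theorem etf_psi_symm (d : ℕ) (x : EuclideanSpace ℝ (Fin d)) (p : Fin d × Fin d) :
    etfPsi d x p.swap = etfPsi d x p := by
  unfold etfPsi
  cases p with
  | mk i j =>
    simp only [Prod.swap_prod_mk]
    rw [mul_comm (x j) (x i)]
    congr 1
    congr 1
    simp [eq_comm]

private theorem etf_inner_bigPsi_W (d : ℕ) (hd : 2 ≤ d)
    (x : Metric.sphere (0 : EuclideanSpace ℝ (Fin d)) 1) :
    ⟪etfBigW d, etfBigPsi d (x : EuclideanSpace ℝ (Fin d))⟫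
    = 2 * (((d:ℝ)+1)/((d:ℝ)+2)) := by
  set x' := (x : EuclideanSpace ℝ (Fin d))
  have h1 : ⟪etfBigW d, etfBigPsi d x'⟫
      = ∑ q : (Fin d × Fin d) × (Fin d × Fin d),
          (etfPsi d x' q.1 * etfPsi d x' q.2) * etfWf d q := by
    rw [etf_euclid_inner]
    exact Finset.sum_congr rfl fun q _ => by
      show etfWf d q * (etfPsi d x' q.1 * etfPsi d x' q.2) = _
      ring
  rw [h1, etf_key3 d _ (etf_psi_symm d x')]
  have h2 : ∑ p : Fin d × Fin d, etfPsi d x' p ^ 2 = ((d:ℝ)+1)/((d:ℝ)+2) := by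
    have key : ∑ p : Fin d × Fin d, etfPsi d x' p * etfPsi d x' p
        = (∑ i, x' i * x' i)^2 - (2*(etfA d) - d*(etfA d)^2) :=
      etf_key1 d (etfA d) x' x' (etf_sphere_sum_sq d x) (etf_sphere_sum_sq d x)
    have h3 : ∑ p : Fin d × Fin d, etfPsi d x' p ^ 2
        = ∑ p : Fin d × Fin d, etfPsi d x' p * etfPsi d x' p :=
      Finset.sum_congr rfl fun p _ => sq (etfPsi d x' p)
    have h4 : ∑ i, x' i * x' i = 1 := by
      have := etf_sphere_sum_sq d x
      simpa [sq] using this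
    rw [h3, key, h4, etf_ha_eq d hd]
    have hd2 : (d:ℝ) + 2 ≠ 0 := by positivity
    field_simp
    ring
  rw [h2]

private theorem etf_W_norm (d : ℕ) : ⟪etfBigW d, etfBigW d⟫ = 2*(d:ℝ)^2 + 2*d := by
  rw [etf_euclid_inner]
  have : ∀ q : (Fin d × Fin d) × (Fin d × Fin d),
      etfBigW d q * etfBigW d q = (etfWf d q)^2 := fun q => (sq (etfWf d q)).symm
  rw [Finset.sum_congr rfl fun q _ => this q, etf_key4]

end EtfAux

/-- For any Borel probability measure `μ` on the unit sphere `S^{d-1} ⊂ ℝ^d`, `d ≥ 2`,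
the energy `∫∫ (⟪x, y⟫² - 1/(d+2))² dμ(x) dμ(y)` is at least `2(d+1)/(d(d+2)²)`. -/
theorem etf_energy_two (d : ℕ) (hd : 2 ≤ d)
    (μ : Measure (Metric.sphere (0 : EuclideanSpace ℝ (Fin d)) 1))
    [IsProbabilityMeasure μ] :
    2 * ((d : ℝ) + 1) / ((d : ℝ) * ((d : ℝ) + 2) ^ 2) ≤
      ∫ x, ∫ y,
        (⟪(x : EuclideanSpace ℝ (Fin d)), (y : EuclideanSpace ℝ (Fin d))⟫ ^ 2
          - 1 / ((d : ℝ) + 2)) ^ 2 ∂μ ∂μ := by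
  set Ψ := fun x : Metric.sphere (0 : EuclideanSpace ℝ (Fin d)) 1 =>
    etfBigPsi d (x : EuclideanSpace ℝ (Fin d)) with hΨ
  have hcont : Continuous Ψ := etf_bigPsi_continuous d
  have hint : Integrable Ψ μ :=
    hcont.integrable_of_hasCompactSupport (HasCompactSupport.of_compactSpace Ψ)
  set m := ∫ x, Ψ x ∂μ with hm
  -- Step 1: the double integral equals ⟪m, m⟫
  have step1 : ∫ x, ∫ y,
      (⟪(x : EuclideanSpace ℝ (Fin d)), (y : EuclideanSpace ℝ (Fin d))⟫ ^ 2
        - 1 / ((d : ℝ) + 2)) ^ 2 ∂μ ∂μ = ⟪m, m⟫ := by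
    have e1 : ∀ x : Metric.sphere (0 : EuclideanSpace ℝ (Fin d)) 1,
        ∫ y, (⟪(x : EuclideanSpace ℝ (Fin d)), (y : EuclideanSpace ℝ (Fin d))⟫ ^ 2
          - 1 / ((d : ℝ) + 2)) ^ 2 ∂μ = ⟪Ψ x, m⟫ := by
      intro x
      rw [← integral_inner hint (Ψ x)]
      exact integral_congr_ae (Filter.Eventually.of_forall fun y =>
        (etf_inner_bigPsi d hd x y).symm)
    calc ∫ x, ∫ y, (⟪(x : EuclideanSpace ℝ (Fin d)), (y : EuclideanSpace ℝ (Fin d))⟫ ^ 2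
          - 1 / ((d : ℝ) + 2)) ^ 2 ∂μ ∂μ
        = ∫ x, ⟪Ψ x, m⟫ ∂μ := integral_congr_ae (Filter.Eventually.of_forall e1)
      _ = ∫ x, ⟪m, Ψ x⟫ ∂μ := integral_congr_ae (Filter.Eventually.of_forall fun x =>
            real_inner_comm _ _)
      _ = ⟪m, m⟫ := integral_inner hint m
  -- Step 2: ⟪W, m⟫ is a fixed constant
  have step2 : ⟪etfBigW d, m⟫ = 2 * (((d:ℝ)+1)/((d:ℝ)+2)) := by
    rw [hm, ← integral_inner hint (etfBigW d)]
    rw [integral_congr_ae (Filter.Eventually.of_forall fun x => etf_inner_bigPsi_W d hd x)]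
    simp
  -- Step 3: Cauchy-Schwarz
  have cs := real_inner_mul_inner_self_le (etfBigW d) m
  rw [step2, etf_W_norm, real_inner_self_eq_norm_sq m] at cs
  rw [step1]
  have hd0 : (0:ℝ) < d := by exact_mod_cast Nat.lt_of_lt_of_le (by norm_num) hd
  have hd2 : (0:ℝ) < (d:ℝ) + 2 := by linarith
  have hmm : ⟪m, m⟫ = ‖m‖^2 := real_inner_self_eq_norm_sq m
  rw [hmm]
  have key : (2 * (((d:ℝ)+1)/((d:ℝ)+2))) * (2 * (((d:ℝ)+1)/((d:ℝ)+2)))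
      = (2*(d:ℝ)^2 + 2*d) * (2 * ((d : ℝ) + 1) / ((d : ℝ) * ((d : ℝ) + 2) ^ 2)) := by
    field_simp
  rw [key] at cs
  have hpos : (0:ℝ) < 2*(d:ℝ)^2 + 2*d := by nlinarith
  exact le_of_mul_le_mul_left (by linarith [cs]) hpos
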